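/- Let V be a real inner product space and let α₁, α₂, ᾱ₃, ᾱ₄, β₁, β₂, β₃, β̄₄ ∈ V satisfy: ⟪α₁,α₁⟫ = ⟪β₁,β₁⟫ = ⟪α₂,α₂⟫ = ⟪β₃,β₃⟫ = ⟪ᾱ₄,ᾱ₄⟫ = ⟪β̄₄,β̄₄⟫ = 2; ⟪α₁,β₁⟫ = −1, ⟪β₁,α₂⟫ = −1, ⟪α₂,β₃⟫ = −1, ⟪β₃,ᾱ₄⟫ = −1, ⟪ᾱ₄,β̄₄⟫ = −1, and all other inner products among α₁, β₁, α₂, β₃, ᾱ₄, β̄₄ vanish; ⟪β₃,ᾱ₃⟫ + ⟪β₁,ᾱ₃⟫ = 0 and ⟪α₁,ᾱ₃⟫ = ⟪α₂,ᾱ₃⟫ = ⟪ᾱ₄,ᾱ₃⟫ = ⟪β̄₄,ᾱ₃⟫ = 0; ⟪α₂,β₂⟫ + ⟪ᾱ₄,β₂⟫ = 0 and ⟪α₁,β₂⟫ = ⟪β₁,β₂⟫ = ⟪β₃,β₂⟫ = ⟪β̄₄,β₂⟫ = 0 (the relevant Gram relations of the Carter diagram E₈(a₅)). Set β₄ :=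 −(β̄₄ + ᾱ₄ + β₃ + α₂ + β₁ + α₁). Then ⟪β₄,β₄⟫ = 2, ⟪β₄,α₁⟫ = −1, and β₄ is orthogonal to each of α₂, ᾱ₃, ᾱ₄, β₁, β₂, β₃ (the Gram relations of the Carter diagram E₈(a₄)). -/
import Mathlib


open scoped RealInnerProductSpace


theorem stmt12 {V : Type*} [NormedAddCommGroup V] [InnerProductSpace ℝ V]
    (α₁ α₂ αb₃ αb₄ β₁ β₂ β₃ βb₄ : V)
    (h0 : ⟪α₁, α₁⟫ = 2)
    (h1 : ⟪β₁, β₁⟫ = 2)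
    (h2 : ⟪α₂, α₂⟫ = 2)
    (h3 : ⟪β₃, β₃⟫ = 2)
    (h4 : ⟪αb₄, αb₄⟫ = 2)
    (h5 : ⟪βb₄, βb₄⟫ = 2)
    (h6 : ⟪α₁, β₁⟫ = -1)
    (h7 : ⟪β₁, α₂⟫ = -1)
    (h8 : ⟪α₂, β₃⟫ = -1)
    (h9 : ⟪β₃, αb₄⟫ = -1)
    (h10 : ⟪αb₄, βb₄⟫ = -1)
    (h11 : ⟪α₁, α₂⟫ = 0)
    (h12 : ⟪α₁, β₃⟫ = 0)
    (h13 : ⟪α₁, αb₄⟫ = 0)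
    (h14 : ⟪α₁, βb₄⟫ = 0)
    (h15 : ⟪β₁, β₃⟫ = 0)
    (h16 : ⟪β₁, αb₄⟫ = 0)
    (h17 : ⟪β₁, βb₄⟫ = 0)
    (h18 : ⟪α₂, αb₄⟫ = 0)
    (h19 : ⟪α₂, βb₄⟫ = 0)
    (h20 : ⟪β₃, βb₄⟫ = 0)
    (h21 : ⟪β₃, αb₃⟫ + ⟪β₁, αb₃⟫ = 0)
    (h22 : ⟪α₁, αb₃⟫ = 0)
    (h23 : ⟪α₂, αb₃⟫ = 0)
    (h24 : ⟪αb₄, αb₃⟫ = 0)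
    (h25 : ⟪βb₄, αb₃⟫ = 0)
    (h26 : ⟪α₂, β₂⟫ + ⟪αb₄, β₂⟫ = 0)
    (h27 : ⟪α₁, β₂⟫ = 0)
    (h28 : ⟪β₁, β₂⟫ = 0)
    (h29 : ⟪β₃, β₂⟫ = 0)
    (h30 : ⟪βb₄, β₂⟫ = 0)
    (β₄ : V) (hdef : β₄ = -(βb₄ + αb₄ + β₃ + α₂ + β₁ + α₁)) :
    ⟪β₄, β₄⟫ = 2 ∧
    ⟪β₄, α₁⟫ = -1 ∧
    ⟪β₄, α₂⟫ = 0 ∧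
    ⟪β₄, αb₃⟫ = 0 ∧
    ⟪β₄, αb₄⟫ = 0 ∧
    ⟪β₄, β₁⟫ = 0 ∧
    ⟪β₄, β₂⟫ = 0 ∧
    ⟪β₄, β₃⟫ = 0 := by
  subst hdef
  simp only [inner_neg_left, inner_add_left, inner_neg_right, inner_add_right]
  refine ⟨?_, ?_, ?_, ?_, ?_, ?_, ?_, ?_⟩ <;>
    linarith [real_inner_comm α₁ α₂, real_inner_comm α₁ αb₃, real_inner_comm α₁ αb₄, real_inner_comm α₁ β₁, real_inner_comm α₁ β₂, real_inner_comm α₁ β₃, real_inner_comm α₁ βb₄, real_inner_comm α₂ αb₃, real_inner_comm α₂ αb₄, real_inner_comm α₂ β₁, real_inner_comm α₂ β₂, real_inner_comm α₂ β₃, real_inner_comm α₂ βb₄, real_inner_comm αb₃ αb₄, real_inner_comm αb₃ β₁, real_inner_comm αb₃ β₂, real_inner_comm αb₃ β₃, real_inner_comm αb₃ βb₄, real_inner_comm αb₄ β₁, real_inner_comm αb₄ β₂, real_inner_comm αb₄ β₃, real_inner_comm αb₄ βb₄, real_inner_comm β₁ β₂, real_inner_comm β₁ β₃, real_inner_comm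 β₁ βb₄, real_inner_comm β₂ β₃, real_inner_comm β₂ βb₄, real_inner_comm β₃ βb₄]
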